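/- Let h>0, α>0 and μ≥0. Define ψ: ℕ→ℝ by ψ(k) := h^μ·Γ(k+μ+1)/Γ(k+1) (this is the h-factorial value (kh+μh)_h^{(μ)}). Then for every n∈ℕ, (S_α ψ)(n) = (Γ(μ+1)/Γ(μ+α+1))·h^{μ+α}·Γ(n+μ+α+1)/Γ(n+1); that is, the fractional h-sum of order α of the h-factorial function of order μ is Γ(μ+1)/Γ(μ+α+1) times the h-factorial function of order μ+α, evaluated at the shifted point. -/

import Mathlib

/-- `c γ m = Γ(γ+m)/(Γ(γ)·Γ(m+1))`. -/
noncomputable def cCoeff (γ : ℝ) (m : ℕ) : ℝ :=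
  Real.Gamma (γ + m) / (Real.Gamma γ * Real.Gamma (m + 1))

/-- Fractional `h`-sum of order `γ`: `(S_γ u)(n) = h^γ·∑_{k=0}^{n} c_γ(n−k)·u(k)`. -/
noncomputable def fracSum (h γ : ℝ) (u : ℕ → ℝ) (n : ℕ) : ℝ :=
  h ^ γ * ∑ k ∈ Finset.range (n + 1), cCoeff γ (n - k) * u k

lemma cCoeff_zero (γ : ℝ) (hγ : 0 < γ) : cCoeff γ 0 = 1 := by
  have hne : Real.Gamma γ ≠ 0 := (Real.Gamma_pos_of_pos hγ).ne'
  simp [cCoeff, Real.Gamma_one, hne]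

lemma cCoeff_succ (γ : ℝ) (hγ : 0 < γ) (m : ℕ) :
    ((m : ℝ) + 1) * cCoeff γ (m + 1) = (γ + m) * cCoeff γ m := by
  have h1 : γ + (m : ℝ) ≠ 0 := by positivity
  have h2 : ((m : ℝ) + 1) ≠ 0 := by positivity
  have e1 : Real.Gamma (γ + ((m : ℕ) + 1 : ℕ)) = (γ + m) * Real.Gamma (γ + m) := by
    push_cast
    rw [show γ + ((m : ℝ) + 1) = (γ + m) + 1 by ring, Real.Gamma_add_one h1]
  have e2 : Real.Gamma ((((m : ℕ) + 1 : ℕ) : ℝ) + 1) = ((m : ℝ) + 1) * Real.Gamma (m + 1) := by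
    push_cast
    rw [Real.Gamma_add_one h2]
  have hΓγ : Real.Gamma γ ≠ 0 := (Real.Gamma_pos_of_pos hγ).ne'
  have hΓm : Real.Gamma ((m : ℝ) + 1) ≠ 0 := by
    have : (0:ℝ) < (m : ℝ) + 1 := by positivity
    exact (Real.Gamma_pos_of_pos this).ne'
  unfold cCoeff
  rw [e1, e2]
  field_simp

lemma cCoeff_conv (α β : ℝ) (hα : 0 < α) (hβ : 0 < β) (n : ℕ) :
    ∑ k ∈ Finset.range (n + 1), cCoeff α (n - k) * cCoeff β k = cCoeff (α + β) n := by
  induction n with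
  | zero => simp [cCoeff_zero α hα, cCoeff_zero β hβ, cCoeff_zero _ (add_pos hα hβ)]
  | succ n ih =>
    have hn1 : ((n : ℝ) + 1) ≠ 0 := by positivity
    have key : ((n : ℝ) + 1) * ∑ k ∈ Finset.range (n + 2), cCoeff α (n + 1 - k) * cCoeff β k
        = (α + β + n) * ∑ k ∈ Finset.range (n + 1), cCoeff α (n - k) * cCoeff β k := by
      rw [Finset.mul_sum, Finset.mul_sum]
      have split : ∀ k ∈ Finset.range (n + 2),
          ((n : ℝ) + 1) * (cCoeff α (n + 1 - k) * cCoeff β k)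
          = ((n + 1 - k : ℕ) : ℝ) * cCoeff α (n + 1 - k) * cCoeff β k
            + (k : ℝ) * cCoeff β k * cCoeff α (n + 1 - k) := by
        intro k hk
        have hk' : k ≤ n + 1 := Nat.lt_succ_iff.mp (Finset.mem_range.mp hk)
        have : ((n + 1 - k : ℕ) : ℝ) = (n : ℝ) + 1 - k := by
          push_cast [Nat.cast_sub hk']; ring
        rw [this]; ring
      rw [Finset.sum_congr rfl split, Finset.sum_add_distrib]
      have sum1 : ∑ k ∈ Finset.range (n + 2),
          ((n + 1 - k : ℕ) : ℝ) * cCoeff α (n + 1 - k) * cCoeff β k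
          = ∑ k ∈ Finset.range (n + 1), (α + ((n - k : ℕ) : ℝ)) * cCoeff α (n - k) * cCoeff β k := by
        rw [Finset.sum_range_succ]
        simp only [Nat.sub_self, Nat.cast_zero, zero_mul, add_zero]
        refine Finset.sum_congr rfl fun k hk => ?_
        have hk' : k ≤ n := Nat.lt_succ_iff.mp (Finset.mem_range.mp hk)
        have h1 : n + 1 - k = (n - k) + 1 := by omega
        rw [h1]
        have := cCoeff_succ α hα (n - k)
        push_cast at this ⊢
        rw [this]
      have sum2 : ∑ k ∈ Finset.range (n + 2),
          (k : ℝ) * cCoeff β k * cCoeff α (n + 1 - k)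
          = ∑ k ∈ Finset.range (n + 1), (β + (k : ℝ)) * cCoeff β k * cCoeff α (n - k) := by
        rw [Finset.sum_range_succ']
        simp only [Nat.cast_zero, zero_mul]
        rw [add_zero]
        refine Finset.sum_congr rfl fun k hk => ?_
        have h1 : n + 1 - (k + 1) = n - k := by omega
        rw [h1]
        have := cCoeff_succ β hβ k
        push_cast at this ⊢
        rw [this]
      rw [sum1, sum2, ← Finset.sum_add_distrib]
      refine Finset.sum_congr rfl fun k hk => ?_
      have hk' : k ≤ n := Nat.lt_succ_iff.mp (Finset.mem_range.mp hk)
      have : ((n - k : ℕ) : ℝ) = (n : ℝ) - k := by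
        push_cast [Nat.cast_sub hk']; ring
      rw [this]; ring
    have step := cCoeff_succ (α + β) (add_pos hα hβ) n
    have : ((n : ℝ) + 1) * ∑ k ∈ Finset.range (n + 2), cCoeff α (n + 1 - k) * cCoeff β k
        = ((n : ℝ) + 1) * cCoeff (α + β) (n + 1) := by
      rw [key, ih, step]
    exact mul_left_cancel₀ hn1 this

theorem fracSum_of_h_factorial (h α μ : ℝ) (hh : 0 < h) (hα : 0 < α) (hμ : 0 ≤ μ)
    (ψ : ℕ → ℝ)
    (hψ : ∀ k : ℕ, ψ k = h ^ μ * (Real.Gamma ((k : ℝ) + μ + 1) / Real.Gamma ((k : ℝ) + 1)))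
    (n : ℕ) :
    fracSum h α ψ n
      = Real.Gamma (μ + 1) / Real.Gamma (μ + α + 1) * h ^ (μ + α)
        * (Real.Gamma ((n : ℝ) + μ + α + 1) / Real.Gamma ((n : ℝ) + 1)) := by
  have hμ1 : (0:ℝ) < μ + 1 := by linarith
  have hΓμ : Real.Gamma (μ + 1) ≠ 0 := (Real.Gamma_pos_of_pos hμ1).ne'
  have hψ' : ∀ k : ℕ, ψ k = h ^ μ * Real.Gamma (μ + 1) * cCoeff (μ + 1) k := by
    intro k
    rw [hψ k]
    unfold cCoeff
    have hΓk : Real.Gamma ((k : ℝ) + 1) ≠ 0 := by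
      have : (0:ℝ) < (k : ℝ) + 1 := by positivity
      exact (Real.Gamma_pos_of_pos this).ne'
    rw [show μ + 1 + (k : ℝ) = (k : ℝ) + μ + 1 by ring]
    field_simp
  have conv := cCoeff_conv α (μ + 1) hα hμ1 n
  unfold fracSum
  have : ∑ k ∈ Finset.range (n + 1), cCoeff α (n - k) * ψ k
      = h ^ μ * Real.Gamma (μ + 1) * cCoeff (α + (μ + 1)) n := by
    rw [← conv, Finset.mul_sum]
    refine Finset.sum_congr rfl fun k _ => ?_
    rw [hψ' k]; ring
  rw [this]
  unfold cCoeff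
  have harg1 : α + (μ + 1) + (n : ℝ) = (n : ℝ) + μ + α + 1 := by ring
  have harg2 : α + (μ + 1) = μ + α + 1 := by ring
  rw [harg1, harg2, show h ^ (μ + α) = h ^ μ * h ^ α from Real.rpow_add hh μ α]
  ring
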